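/- For every real c > 0, the improper integral ∫₀¹ ( 4r/(1 − r²)² − 4c²·r^{2c−1}/(1 − r^{2c})² ) dr converges and equals c − 1; that is, lim_{s → 1⁻} ∫₀^s ( 4r/(1 − r²)² − 4c²·r^{2c−1}/(1 − r^{2c})² ) dr = c − 1. -/

import Mathlib

open Real Set

/-- For every real c > 0, the improper integral
∫₀¹ ( 4r/(1 − r²)² − 4c²·r^{2c−1}/(1 − r^{2c})² ) dr converges and equals c − 1, in the sense
that the partial integrals ∫₀ˢ tend to c − 1 as s → 1⁻. -/
theorem chern_integral_family (c : ℝ) (hc : 0 < c) :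
    Filter.Tendsto
      (fun s : ℝ => ∫ r in (0:ℝ)..s,
        (4 * r / (1 - r^2)^2 - 4 * c^2 * r ^ (2*c - 1) / (1 - r ^ (2*c))^2))
      (nhdsWithin 1 (Set.Iio 1)) (nhds (c - 1)) := by
  have h2c : (0:ℝ) < 2*c := by linarith
  set F : ℝ → ℝ := fun r => 2/(1-r^2) - 2*c/(1-r^(2*c)) with hFdef
  have hF0 : F 0 = 2 - 2*c := by
    simp [hFdef, Real.zero_rpow h2c.ne']
  -- key FTC identity on (0,1)
  have key : ∀ s ∈ Ioo (0:ℝ) 1,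
      (∫ r in (0:ℝ)..s, (4 * r / (1 - r^2)^2 - 4 * c^2 * r ^ (2*c - 1) / (1 - r ^ (2*c))^2))
        = F s - F 0 := by
    intro s hs
    obtain ⟨hs0, hs1⟩ := hs
    have hne : ∀ r ∈ Icc (0:ℝ) s, (1 - r^2 ≠ 0) ∧ (1 - r^(2*c) ≠ 0) := by
      intro r hr
      have hr1 : r < 1 := lt_of_le_of_lt hr.2 hs1
      have h1 : r^2 < 1 := by nlinarith [hr.1]
      have h2 : r^(2*c) < 1 := Real.rpow_lt_one hr.1 hr1 h2c
      exact ⟨by linarith, by linarith⟩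
    have hcontp : Continuous (fun r : ℝ => r ^ (2*c)) :=
      Real.continuous_rpow_const h2c.le
    have hcontF : ContinuousOn F (Icc 0 s) := by
      apply ContinuousOn.sub
      · exact continuousOn_const.div (by fun_prop) (fun r hr => (hne r hr).1)
      · exact continuousOn_const.div
          (continuousOn_const.sub hcontp.continuousOn) (fun r hr => (hne r hr).2)
    have hderiv : ∀ x ∈ Ioo (0:ℝ) s, HasDerivWithinAt F
        (4 * x / (1 - x^2)^2 - 4 * c^2 * x ^ (2*c - 1) / (1 - x ^ (2*c))^2) (Ioi x) x := by
      intro x hx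
      have hxI : x ∈ Icc (0:ℝ) s := ⟨hx.1.le, hx.2.le⟩
      have hne1 := (hne x hxI).1
      have hne2 := (hne x hxI).2
      have h1 : HasDerivAt (fun r : ℝ => 1 - r^2) (-((2:ℕ) * x^1)) x :=
        (hasDerivAt_pow 2 x).const_sub 1
      have h2 : HasDerivAt (fun r : ℝ => 1 - r^(2*c)) (-(2*c * x^(2*c-1))) x :=
        (Real.hasDerivAt_rpow_const (Or.inl hx.1.ne')).const_sub 1
      have hA : HasDerivAt (fun r : ℝ => 2/(1-r^2))
          ((0 * (1-x^2) - 2 * (-((2:ℕ) * x^1))) / (1-x^2)^2) x :=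
        (hasDerivAt_const x (2:ℝ)).div h1 hne1
      have hB : HasDerivAt (fun r : ℝ => 2*c/(1-r^(2*c)))
          ((0 * (1-x^(2*c)) - 2*c * (-(2*c * x^(2*c-1)))) / (1-x^(2*c))^2) x :=
        (hasDerivAt_const x (2*c)).div h2 hne2
      have := hA.sub hB
      have heq : (0 * (1-x^2) - 2 * (-((2:ℕ) * x^1))) / (1-x^2)^2
          - (0 * (1-x^(2*c)) - 2*c * (-(2*c * x^(2*c-1)))) / (1-x^(2*c))^2
          = 4 * x / (1 - x^2)^2 - 4 * c^2 * x ^ (2*c - 1) / (1 - x ^ (2*c))^2 := by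
        push_cast
        field_simp
        ring
      rw [heq] at this
      exact this.hasDerivWithinAt
    have hint : IntervalIntegrable
        (fun r => 4 * r / (1 - r^2)^2 - 4 * c^2 * r ^ (2*c - 1) / (1 - r ^ (2*c))^2)
        MeasureTheory.volume 0 s := by
      have huIcc : uIcc (0:ℝ) s = Icc 0 s := uIcc_of_le hs0.le
      apply IntervalIntegrable.sub
      · apply ContinuousOn.intervalIntegrable
        rw [huIcc]
        exact (continuousOn_id.const_smul (4:ℝ)).div (by fun_prop) (fun r hr => pow_ne_zero 2 (hne r hr).1)
      · have h := (intervalIntegral.intervalIntegrable_rpow' (a := 0) (b := s) (r := 2*c-1)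
          (by linarith)).mul_continuousOn (g := fun r => 4*c^2/(1-r^(2*c))^2) ?_
        · have heq : (fun r : ℝ => 4 * c^2 * r ^ (2*c-1) / (1 - r ^ (2*c))^2)
              = fun r : ℝ => r ^ (2*c-1) * (4*c^2/(1-r^(2*c))^2) := by
            funext r; ring
          rw [heq]; exact h
        · rw [huIcc]
          exact continuousOn_const.div
            ((continuousOn_const.sub (Real.continuous_rpow_const h2c.le).continuousOn).pow 2)
            (fun r hr => pow_ne_zero 2 (hne r hr).2)
    exact intervalIntegral.integral_eq_sub_of_hasDeriv_right_of_le hs0.le hcontF hderiv hint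

  -- the limit of F at 1 from the left
  have hmem : Ioo (0:ℝ) 1 ∈ nhdsWithin (1:ℝ) (Iio 1) :=
    Ioo_mem_nhdsLT_of_mem (by constructor <;> norm_num)
  have hslope : ∀ p : ℝ, Filter.Tendsto (fun s : ℝ => (s^p - 1)/(s-1))
      (nhdsWithin (1:ℝ) (Iio 1)) (nhds p) := by
    intro p
    have hd : HasDerivAt (fun x : ℝ => x^p) (p * 1^(p-1)) 1 :=
      Real.hasDerivAt_rpow_const (Or.inl one_ne_zero)
    rw [Real.one_rpow, mul_one] at hd
    rw [hasDerivAt_iff_tendsto_slope] at hd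
    have h2 := hd.mono_left
      (nhdsWithin_mono 1 (fun x hx => mem_compl_singleton_iff.mpr (ne_of_lt hx)))
    exact h2.congr (fun s => by rw [slope_def_field, Real.one_rpow])
  have hrtend : Filter.Tendsto (fun s : ℝ => s^(2*c-1)) (nhdsWithin (1:ℝ) (Iio 1)) (nhds 1) := by
    have h : ContinuousAt (fun s : ℝ => s^(2*c-1)) 1 :=
      Real.continuousAt_rpow_const 1 _ (Or.inl one_ne_zero)
    simpa [Real.one_rpow] using h.tendsto.mono_left nhdsWithin_le_nhds
  set fN : ℝ → ℝ := fun s => 2*c*(1-s) - (1-s^(2*c)) with hfN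
  set gD : ℝ → ℝ := fun s => (1-s)*(1-s^(2*c)) with hgD
  set fN' : ℝ → ℝ := fun s => 2*c*(-1) - (-(2*c*s^(2*c-1))) with hfN'
  set gD' : ℝ → ℝ := fun s => (-1)*(1-s^(2*c)) + (1-s)*(-(2*c*s^(2*c-1))) with hgD'
  have hcontp : Continuous (fun r : ℝ => r ^ (2*c)) := Real.continuous_rpow_const h2c.le
  have hff' : ∀ᶠ s in nhdsWithin (1:ℝ) (Iio 1), HasDerivAt fN (fN' s) s := by
    filter_upwards [hmem] with s hs
    exact (((hasDerivAt_id s).const_sub 1).const_mul (2*c)).sub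
      ((Real.hasDerivAt_rpow_const (Or.inl hs.1.ne')).const_sub 1)
  have hgg' : ∀ᶠ s in nhdsWithin (1:ℝ) (Iio 1), HasDerivAt gD (gD' s) s := by
    filter_upwards [hmem] with s hs
    exact ((hasDerivAt_id s).const_sub 1).mul
      ((Real.hasDerivAt_rpow_const (Or.inl hs.1.ne')).const_sub 1)
  have hg'ne : ∀ᶠ s in nhdsWithin (1:ℝ) (Iio 1), gD' s ≠ 0 := by
    filter_upwards [hmem] with s hs
    have h1 : s^(2*c) < 1 := Real.rpow_lt_one hs.1.le hs.2 h2c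
    have h2 : (0:ℝ) < s^(2*c-1) := Real.rpow_pos_of_pos hs.1 _
    have h3 : (0:ℝ) < 1 - s := by linarith [hs.2]
    have : gD' s < 0 := by
      simp only [hgD']
      nlinarith [mul_pos h3 (mul_pos h2c h2)]
    exact ne_of_lt this
  have hfa : Filter.Tendsto fN (nhdsWithin (1:ℝ) (Iio 1)) (nhds 0) := by
    have hcf : Continuous fN :=
      (continuous_const.mul (continuous_const.sub continuous_id)).sub
        (continuous_const.sub hcontp)
    have h := (hcf.tendsto 1).mono_left (nhdsWithin_le_nhds (s := Iio 1))
    simpa [hfN, Real.one_rpow] using h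
  have hga : Filter.Tendsto gD (nhdsWithin (1:ℝ) (Iio 1)) (nhds 0) := by
    have hcf : Continuous gD :=
      (continuous_const.sub continuous_id).mul (continuous_const.sub hcontp)
    have h := (hcf.tendsto 1).mono_left (nhdsWithin_le_nhds (s := Iio 1))
    simpa [hgD, Real.one_rpow] using h
  have hdiv : Filter.Tendsto (fun s => fN' s / gD' s) (nhdsWithin (1:ℝ) (Iio 1))
      (nhds (c - 1/2)) := by
    have hnum := (hslope (2*c-1)).const_mul (2*c)
    have hden := (hslope (2*c)).add (hrtend.const_mul (2*c))
    have hq := hnum.div hden (by norm_num; nlinarith : (2*c + 2*c*1 : ℝ) ≠ 0)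
    have hval : (2*c*(2*c-1))/(2*c+2*c*1) = c - 1/2 := by
      field_simp
      ring
    rw [hval] at hq
    refine Filter.Tendsto.congr' (Filter.eventuallyEq_of_mem hmem (fun s hs => ?_)) hq
    have hs1 : s - 1 ≠ 0 := by
      have := hs.2; intro h; apply absurd this; simp; nlinarith
    simp only [hfN', hgD', Pi.div_apply]
    field_simp
    ring
  have hPhi := HasDerivAt.lhopital_zero_nhdsLT hff' hgg' hg'ne hfa hga hdiv
  have hF1 : Filter.Tendsto F (nhdsWithin (1:ℝ) (Iio 1)) (nhds (1 - c)) := by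
    have h1 : Filter.Tendsto (fun s : ℝ => 1/(1+s)) (nhdsWithin (1:ℝ) (Iio 1)) (nhds (1/2)) := by
      have hca : ContinuousAt (fun s : ℝ => 1/(1+s)) 1 := by
        apply ContinuousAt.div
        · fun_prop
        · fun_prop
        · norm_num
      have h := hca.tendsto.mono_left (nhdsWithin_le_nhds (s := Iio 1))
      convert h using 2
      norm_num
    have h2 := h1.sub hPhi
    have hval : (1/2 - (c - 1/2) : ℝ) = 1 - c := by ring
    rw [hval] at h2
    refine Filter.Tendsto.congr' (Filter.eventuallyEq_of_mem hmem (fun s hs => ?_)) h2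
    have hs1 : (1:ℝ) - s ≠ 0 := by nlinarith [hs.2]
    have hs2 : (1:ℝ) + s ≠ 0 := by nlinarith [hs.1]
    have hsp : s^(2*c) < 1 := Real.rpow_lt_one hs.1.le hs.2 h2c
    have hs3 : (1:ℝ) - s^(2*c) ≠ 0 := by linarith
    have hs4 : (1:ℝ) - s^2 ≠ 0 := by nlinarith [hs.1, hs.2]
    simp only [hfN, hgD, hFdef]
    field_simp
    ring
  have hfinal := hF1.sub (tendsto_const_nhds (x := (2:ℝ)-2*c)
    (f := nhdsWithin (1:ℝ) (Iio 1)))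
  have hval : ((1 - c) - (2 - 2*c) : ℝ) = c - 1 := by ring
  rw [hval] at hfinal
  refine Filter.Tendsto.congr' (Filter.eventuallyEq_of_mem hmem (fun s hs => ?_)) hfinal
  rw [key s hs, hF0]
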